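/- Let f_{ℓ,a,b}(x) = ∑_z ζ_z x^z be the polynomial whose coefficient ζ_z counts the number of length-ℓ words over alphabet Π with first character a, last character b, and free energy z. Then for any ℓ₁, ℓ₂ ≥ 1: f_{ℓ₁+ℓ₂,a,b}(x) = ∑_{d₁,d₂ ∈ Π} f_{ℓ₁,a,d₁}(x) · f_{ℓ₂,d₂,b}(x) · x^{Γ(d₁,d₂)}. -/

import Mathlib

/-- The free energy of a word, valued in `ℕ`. -/
def freeEnergy {α : Type*} (Γ : α → α → ℕ) (l : List α) : ℕ :=
  ((l.zip l.tail).map fun p => Γ p.1 p.2).sum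

/-- `f_{ℓ,a,b}(x)`: the polynomial whose coefficient of `x^z` is the number of
length-`ℓ` words with first character `a`, last character `b`, and free
energy `z`. -/
noncomputable def f {α : Type*} [Fintype α] [DecidableEq α] (Γ : α → α → ℕ)
    (ℓ : ℕ) (a b : α) : Polynomial ℕ :=
  ∑ v ∈ Finset.univ.filter (fun v : List.Vector α ℓ =>
      v.toList.head? = some a ∧ v.toList.getLast? = some b),
    Polynomial.X ^ freeEnergy Γ v.toList

lemma freeEnergy_cons₂ {α : Type*} (Γ : α → α → ℕ) (x y : α) (t : List α) :
    freeEnergy Γ (x :: y :: t) = Γ x y + freeEnergy Γ (y :: t) := by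
  simp [freeEnergy]

lemma freeEnergy_append {α : Type*} (Γ : α → α → ℕ) {l₁ l₂ : List α} {c d : α}
    (hc : l₁.getLast? = some c) (hd : l₂.head? = some d) :
    freeEnergy Γ (l₁ ++ l₂) = freeEnergy Γ l₁ + freeEnergy Γ l₂ + Γ c d := by
  induction l₁ with
  | nil => simp at hc
  | cons x t ih =>
    cases t with
    | nil =>
      simp at hc
      subst hc
      cases l₂ with
      | nil => simp at hd
      | cons y t₂ =>
        simp at hd
        subst hd
        simp [freeEnergy_cons₂, freeEnergy, Nat.add_comm]
    | cons y t' =>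
      have h := ih (by simpa using hc)
      simp only [List.cons_append] at h ⊢
      rw [freeEnergy_cons₂, freeEnergy_cons₂, h]
      ring

lemma head?_take' {α : Type*} {l : List α} {n : ℕ} (hn : 0 < n) :
    (l.take n).head? = l.head? := by
  rw [List.head?_eq_getElem?, List.head?_eq_getElem?, List.getElem?_take, if_pos hn]

lemma getLast?_take' {α : Type*} {l : List α} {n : ℕ} (hlen : n ≤ l.length) (hn : 0 < n) :
    (l.take n).getLast? = l[n - 1]? := by
  rw [List.getLast?_eq_getElem?, List.length_take,
    show min n l.length = n from by omega, List.getElem?_take, if_pos (by omega)]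

lemma getLast?_drop' {α : Type*} {l : List α} {n : ℕ} (h : n < l.length) :
    (l.drop n).getLast? = l.getLast? := by
  rw [List.getLast?_eq_getElem?, List.getLast?_eq_getElem?, List.length_drop,
    List.getElem?_drop]
  congr 1
  omega

/-- The convolution identity
`f_{ℓ₁+ℓ₂,a,b}(x) = ∑_{d₁,d₂} f_{ℓ₁,a,d₁}(x) · f_{ℓ₂,d₂,b}(x) · x^{Γ(d₁,d₂)}`. -/
theorem stmt_16 {α : Type*} [Fintype α] [DecidableEq α] (Γ : α → α → ℕ)
    (ℓ₁ ℓ₂ : ℕ) (h₁ : 1 ≤ ℓ₁) (h₂ : 1 ≤ ℓ₂) (a b : α) :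
    f Γ (ℓ₁ + ℓ₂) a b =
      ∑ d₁ : α, ∑ d₂ : α, f Γ ℓ₁ a d₁ * f Γ ℓ₂ d₂ b *
        Polynomial.X ^ Γ d₁ d₂ := by
  classical
  set key : List.Vector α (ℓ₁ + ℓ₂) → α × α := fun v =>
    (v.toList[ℓ₁ - 1]'(by rw [List.Vector.toList_length]; omega),
     v.toList[ℓ₁]'(by rw [List.Vector.toList_length]; omega)) with hkey
  rw [show f Γ (ℓ₁ + ℓ₂) a b
      = ∑ c : α × α, ∑ v ∈ (Finset.univ.filter
          (fun v : List.Vector α (ℓ₁ + ℓ₂) =>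
            v.toList.head? = some a ∧ v.toList.getLast? = some b)).filter
          (fun v => key v = c),
          Polynomial.X ^ freeEnergy Γ v.toList from
    (Finset.sum_fiberwise _ key _).symm, Fintype.sum_prod_type]
  refine Finset.sum_congr rfl fun d₁ _ => Finset.sum_congr rfl fun d₂ _ => ?_
  rw [f, f, Finset.sum_mul_sum]
  simp only [Finset.sum_mul]
  rw [← Finset.sum_product']
  refine Finset.sum_nbij'
    (fun v => (⟨v.toList.take ℓ₁, by
        rw [List.length_take, List.Vector.toList_length]; omega⟩,
      ⟨v.toList.drop ℓ₁, by
        rw [List.length_drop, List.Vector.toList_length]; omega⟩))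
    (fun p => p.1 ++ p.2) ?_ ?_ ?_ ?_ ?_
  · intro v hv
    simp only [Finset.mem_filter, Finset.mem_univ, true_and, hkey, Prod.mk.injEq] at hv
    obtain ⟨⟨ha, hb⟩, hd₁, hd₂⟩ := hv
    have hlen : v.toList.length = ℓ₁ + ℓ₂ := List.Vector.toList_length v
    simp only [Finset.mem_product, Finset.mem_filter, Finset.mem_univ, true_and]
    refine ⟨Finset.mem_filter.mpr ⟨Finset.mem_univ _, ?_, ?_⟩,
      Finset.mem_filter.mpr ⟨Finset.mem_univ _, ?_, ?_⟩⟩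
    · rw [List.Vector.toList_mk, head?_take' h₁, ha]
    · rw [List.Vector.toList_mk, getLast?_take' (by omega) h₁,
        List.getElem?_eq_getElem (by omega), hd₁]
    · rw [List.Vector.toList_mk, List.head?_drop,
        List.getElem?_eq_getElem (by omega), hd₂]
    · rw [List.Vector.toList_mk, getLast?_drop' (by omega), hb]
  · intro p hp
    simp only [Finset.mem_product, Finset.mem_filter, Finset.mem_univ, true_and] at hp
    obtain ⟨⟨ha, hd₁⟩, hd₂, hb⟩ := hp
    have hl1 : p.1.toList.length = ℓ₁ := List.Vector.toList_length p.1
    have hl2 : p.2.toList.length = ℓ₂ := List.Vector.toList_length p.2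
    have e₁ : p.1.toList[ℓ₁ - 1]? = some d₁ := by
      rw [← show p.1.toList.length - 1 = ℓ₁ - 1 from by omega,
        ← List.getLast?_eq_getElem?, hd₁]
    have e₂ : p.2.toList[0]? = some d₂ := by
      rw [← List.head?_eq_getElem?, hd₂]
    obtain ⟨h1', e₁⟩ := List.getElem?_eq_some_iff.mp e₁
    obtain ⟨h2', e₂⟩ := List.getElem?_eq_some_iff.mp e₂
    simp only [Finset.mem_filter, Finset.mem_univ, true_and, hkey, Prod.mk.injEq,
      List.Vector.toList_append]
    refine ⟨⟨?_, ?_⟩, ?_, ?_⟩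
    · rw [List.head?_append, ha]; rfl
    · rw [List.getLast?_append, hb]; rfl
    · rw [List.getElem_append_left (by omega), e₁]
    · rw [List.getElem_append_right (by omega)]
      simp only [hl1, Nat.sub_self]
      exact e₂
  · intro v _
    apply List.Vector.eq
    rw [List.Vector.toList_append, List.Vector.toList_mk, List.Vector.toList_mk,
      List.take_append_drop]
  · intro p _
    have hl1 : p.1.toList.length = ℓ₁ := List.Vector.toList_length p.1
    ext1
    · apply List.Vector.eq
      rw [List.Vector.toList_mk, List.Vector.toList_append, List.take_left' hl1]
    · apply List.Vector.eq
      rw [List.Vector.toList_mk, List.Vector.toList_append, List.drop_left' hl1]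
  · intro v hv
    simp only [Finset.mem_filter, Finset.mem_univ, true_and, hkey, Prod.mk.injEq] at hv
    obtain ⟨⟨ha, hb⟩, hd₁, hd₂⟩ := hv
    have hlen : v.toList.length = ℓ₁ + ℓ₂ := List.Vector.toList_length v
    have hc : (v.toList.take ℓ₁).getLast? = some d₁ := by
      rw [getLast?_take' (by omega) h₁, List.getElem?_eq_getElem (by omega), hd₁]
    have hd : (v.toList.drop ℓ₁).head? = some d₂ := by
      rw [List.head?_drop, List.getElem?_eq_getElem (by omega), hd₂]
    conv_lhs => rw [← List.take_append_drop ℓ₁ v.toList]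
    rw [freeEnergy_append Γ hc hd, pow_add, pow_add, List.Vector.toList_mk,
      List.Vector.toList_mk]
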